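/- Suppose X ⊆ ℤ⁺, k ≥ 2 is an integer, and ε > 0 with 1/(2ε) a positive integer, such that for every arithmetic progression P of length k and gap Δ > 0, sup_{p ∈ P} inf_{x ∈ X} |p − x| > εΔ. Then for all integers m ≥ 0 and n ≥ 2, #(X ∩ [m+1, m+n]) ≤ ((k−1)/(2ε)) · n^{log((k−1)/(2ε))/log(k/(2ε))}. -/

import Mathlib

set_option maxHeartbeats 1000000

private lemma ncard_biUnion_le' {α : Type*} (F : Finset ℕ) (f : ℕ → Set α) :
    (⋃ t ∈ F, f t).ncard ≤ ∑ t ∈ F, (f t).ncard := by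
  classical
  induction F using Finset.induction_on with
  | empty => simp
  | insert _ _ ha ih =>
    rename_i a s
    rw [Finset.set_biUnion_insert, Finset.sum_insert ha]
    exact (Set.ncard_union_le _ _).trans (by omega)

/-- If X stays ε-far (relative to the gap) from every arithmetic progression of
length k, then the counting function obeys a polynomial bound. -/
theorem count_bound_of_avoiding_APs (X : Set ℕ) (hX : ∀ x ∈ X, 0 < x)
    (k : ℕ) (hk : 2 ≤ k) (ε : ℝ) (hε : 0 < ε)
    (hint : ∃ j : ℕ, 0 < j ∧ (j : ℝ) = 1 / (2 * ε))
    (havoid : ∀ x Δ : ℝ, 0 < Δ → ∃ i : ℕ, i < k ∧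
      sInf {d : ℝ | ∃ y ∈ X, d = |x + i * Δ - (y : ℝ)|} > ε * Δ) :
    ∀ m n : ℕ, 2 ≤ n →
      ((X ∩ Set.Icc (m + 1) (m + n)).ncard : ℝ) ≤
        ((k - 1) / (2 * ε)) *
          (n : ℝ) ^ (Real.log ((k - 1) / (2 * ε)) / Real.log (k / (2 * ε))) := by
  obtain ⟨j, hj0, hjε⟩ := hint
  have hεj : ε * (j : ℝ) = 1 / 2 := by
    rw [hjε]; field_simp
  have hkj2 : 1 < k * j := by nlinarith
  have hkj0R : (0:ℝ) < ((k*j : ℕ) : ℝ) := by positivity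
  -- finiteness of the counting sets
  have hfin : ∀ a L : ℝ, ({y : ℕ | y ∈ X ∧ a < (y:ℝ) ∧ (y:ℝ) ≤ a + L}).Finite := by
    intro a L
    apply (Set.finite_Iic (⌈a+L⌉₊)).subset
    intro y hy
    have : (y:ℝ) ≤ (⌈a+L⌉₊ : ℝ) := hy.2.2.trans (Nat.le_ceil _)
    exact_mod_cast this
  -- main induction
  have key : ∀ s : ℕ, ∀ a L : ℝ, 0 < L → L ≤ ((k*j : ℕ) : ℝ)^s →
      ({y : ℕ | y ∈ X ∧ a < (y:ℝ) ∧ (y:ℝ) ≤ a + L}).ncard ≤ ((k-1)*j)^s := by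
    intro s
    induction s with
    | zero =>
      intro a L hL hLle
      simp only [pow_zero] at hLle ⊢
      rw [Set.ncard_le_one_iff (hfin a L)]
      rintro y z ⟨-, hy1, hy2⟩ ⟨-, hz1, hz2⟩
      have h1 : (y:ℝ) < (z:ℝ) + 1 := by linarith
      have h2 : (z:ℝ) < (y:ℝ) + 1 := by linarith
      have h1' : y < z + 1 := by exact_mod_cast h1
      have h2' : z < y + 1 := by exact_mod_cast h2
      omega
    | succ s IH =>
      intro a L hL hLle
      set δ : ℝ := L / ((k*j : ℕ) : ℝ) with hδdef
      have hδ : 0 < δ := div_pos hL hkj0R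
      set S : ℕ → Set ℕ :=
        fun t => {y : ℕ | y ∈ X ∧ a + (t:ℝ)*δ < (y:ℝ) ∧ (y:ℝ) ≤ a + (t:ℝ)*δ + δ} with hS
      have hSbound : ∀ t : ℕ, (S t).ncard ≤ ((k-1)*j)^s := by
        intro t
        apply IH (a + (t:ℝ)*δ) δ hδ
        rw [hδdef, div_le_iff₀ hkj0R, ← pow_succ]
        exact hLle
      -- one empty block per residue
      have hempty : ∀ r : ℕ, ∃ i : ℕ, i < k ∧ (r < j → S (i*j + r) = ∅) := by
        intro r
        obtain ⟨i, hik, hinf⟩ :=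
          havoid (a + (r:ℝ)*δ + δ/2) ((j:ℝ)*δ) (by positivity)
        refine ⟨i, hik, fun _ => ?_⟩
        rw [Set.eq_empty_iff_forall_notMem]
        rintro y ⟨hyX, hy1, hy2⟩
        have hbdd : BddBelow {d : ℝ | ∃ y ∈ X,
            d = |a + (r:ℝ)*δ + δ/2 + (i:ℝ) * ((j:ℝ)*δ) - (y:ℝ)|} := by
          refine ⟨0, ?_⟩
          rintro d ⟨y, -, rfl⟩
          exact abs_nonneg _
        have hle := csInf_le hbdd ⟨y, hyX, rfl⟩
        have hgt := lt_of_lt_of_le hinf hle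
        have hcast : ((i*j + r : ℕ) : ℝ) = (i:ℝ)*(j:ℝ) + (r:ℝ) := by push_cast; ring
        rw [hcast] at hy1 hy2
        have habs : |a + (r:ℝ)*δ + δ/2 + (i:ℝ) * ((j:ℝ)*δ) - (y:ℝ)| ≤ δ/2 := by
          rw [abs_le]; constructor <;> nlinarith
        have hεδ : ε * ((j:ℝ)*δ) = δ/2 := by nlinarith
        rw [hεδ] at hgt
        linarith
      choose f hfk hfe using hempty
      -- covering
      have hcover : {y : ℕ | y ∈ X ∧ a < (y:ℝ) ∧ (y:ℝ) ≤ a + L} ⊆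
          ⋃ t ∈ Finset.range (k*j), S t := by
        rintro y ⟨hyX, hy1, hy2⟩
        set u : ℝ := ((y:ℝ) - a) / δ with hudef
        have hu0 : 0 < u := div_pos (by linarith) hδ
        have hyu : (y:ℝ) = a + u * δ := by
          rw [hudef]; field_simp; ring
        have huL : u ≤ ((k*j : ℕ) : ℝ) := by
          rw [hudef, div_le_iff₀ hδ, hδdef]
          field_simp
          linarith
        have hc1 : 1 ≤ ⌈u⌉₊ := Nat.one_le_iff_ne_zero.mpr (by
          simpa [Nat.ceil_eq_zero, not_le] using hu0.not_ge ∘ fun h => h)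
        have hckj : ⌈u⌉₊ ≤ k*j := Nat.ceil_le.mpr huL
        refine Set.mem_biUnion (Finset.mem_range.mpr (show ⌈u⌉₊ - 1 < k*j by omega)) ?_
        have hcastt : ((⌈u⌉₊ - 1 : ℕ) : ℝ) = (⌈u⌉₊ : ℝ) - 1 := by
          push_cast [hc1]; ring
        have hlo : ((⌈u⌉₊ - 1 : ℕ) : ℝ) < u := by
          rw [hcastt]
          have := Nat.ceil_lt_add_one hu0.le
          linarith
        have hhi : u ≤ ((⌈u⌉₊ - 1 : ℕ) : ℝ) + 1 := by
          rw [hcastt]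
          have := Nat.le_ceil u
          linarith
        refine ⟨hyX, ?_, ?_⟩
        · rw [hyu]
          have := mul_lt_mul_of_pos_right hlo hδ
          linarith
        · rw [hyu]
          have := mul_le_mul_of_nonneg_right hhi hδ.le
          rw [add_one_mul] at this
          linarith
      have hfinU : (⋃ t ∈ Finset.range (k*j), S t).Finite := by
        apply Set.Finite.biUnion (Finset.range (k*j)).finite_toSet
        intro t _
        exact hfin (a + (t:ℝ)*δ) δ
      have step1 := Set.ncard_le_ncard hcover hfinU
      have step2 := ncard_biUnion_le' (Finset.range (k*j)) S
      -- the bad indices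
      set bad : Finset ℕ := (Finset.range j).image (fun r => f r * j + r) with hbad
      have hbadsub : bad ⊆ Finset.range (k*j) := by
        intro t ht
        obtain ⟨r, hr, rfl⟩ := Finset.mem_image.mp ht
        rw [Finset.mem_range] at hr ⊢
        have := hfk r
        nlinarith
      have hbadcard : bad.card = j := by
        rw [hbad, Finset.card_image_of_injOn, Finset.card_range]
        intro r1 h1 r2 h2 he
        have he' : f r1 * j + r1 = f r2 * j + r2 := he
        simp only [Finset.coe_range, Set.mem_Iio] at h1 h2
        have e1 : (f r1 * j + r1) % j = r1 := by
          simp [Nat.add_mod, Nat.mul_mod_left, Nat.mod_eq_of_lt h1]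
        have e2 : (f r2 * j + r2) % j = r2 := by
          simp [Nat.add_mod, Nat.mul_mod_left, Nat.mod_eq_of_lt h2]
        rw [← e1, ← e2, he']
      have step3 : ∑ t ∈ Finset.range (k*j), (S t).ncard =
          ∑ t ∈ Finset.range (k*j) \ bad, (S t).ncard := by
        refine (Finset.sum_subset Finset.sdiff_subset ?_).symm
        intro t ht hts
        have htbad : t ∈ bad := by
          by_contra h
          exact hts (Finset.mem_sdiff.mpr ⟨ht, h⟩)
        obtain ⟨r, hr, rfl⟩ := Finset.mem_image.mp htbad
        rw [Finset.mem_range] at hr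
        rw [hfe r hr, Set.ncard_empty]
      have step4 : ∑ t ∈ Finset.range (k*j) \ bad, (S t).ncard ≤
          (k*j - j) * ((k-1)*j)^s := by
        have hcard : (Finset.range (k*j) \ bad).card = k*j - j := by
          rw [Finset.card_sdiff_of_subset hbadsub, Finset.card_range, hbadcard]
        calc ∑ t ∈ Finset.range (k*j) \ bad, (S t).ncard
            ≤ (Finset.range (k*j) \ bad).card * ((k-1)*j)^s := by
              rw [← smul_eq_mul]
              exact Finset.sum_le_card_nsmul _ _ _ (fun t _ => hSbound t)
          _ = (k*j - j) * ((k-1)*j)^s := by rw [hcard]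
      have hfinal : k*j - j = (k-1)*j := by
        cases k with
        | zero => omega
        | succ k' => simp [Nat.succ_mul, Nat.succ_sub_one]
      calc ({y : ℕ | y ∈ X ∧ a < (y:ℝ) ∧ (y:ℝ) ≤ a + L}).ncard
          ≤ (⋃ t ∈ Finset.range (k*j), S t).ncard := step1
        _ ≤ ∑ t ∈ Finset.range (k*j), (S t).ncard := step2
        _ = ∑ t ∈ Finset.range (k*j) \ bad, (S t).ncard := step3
        _ ≤ (k*j - j) * ((k-1)*j)^s := step4
        _ = ((k-1)*j)^(s+1) := by rw [hfinal, pow_succ]; ring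
  -- conclusion
  intro m n hn
  have h2e : 2 * ε = 1 / (j:ℝ) := by
    have hj0' : (0:ℝ) < (j:ℝ) := by exact_mod_cast hj0
    field_simp at hjε ⊢
    linarith [hjε]
  have hCr : ((k:ℝ) - 1) / (2 * ε) = (((k-1)*j : ℕ) : ℝ) := by
    rw [h2e]
    push_cast [Nat.cast_sub (by omega : 1 ≤ k)]
    have hj0' : (0:ℝ) < (j:ℝ) := by exact_mod_cast hj0
    field_simp
  have hKr : (k:ℝ) / (2 * ε) = (((k*j) : ℕ) : ℝ) := by
    rw [h2e]
    push_cast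
    have hj0' : (0:ℝ) < (j:ℝ) := by exact_mod_cast hj0
    field_simp
  rw [hCr, hKr]
  set C : ℕ := (k-1)*j with hCdef
  set Kn : ℕ := k*j with hKdef
  have hC1 : 1 ≤ C := by
    have : 1 ≤ k - 1 := by omega
    exact Nat.one_le_iff_ne_zero.mpr (by positivity)
  have hCr1 : (1:ℝ) ≤ (C:ℝ) := by exact_mod_cast hC1
  have hKr1 : (1:ℝ) < (Kn:ℝ) := by exact_mod_cast hkj2
  set α : ℝ := Real.log (C:ℝ) / Real.log (Kn:ℝ) with hαdef
  have hlogK : 0 < Real.log (Kn:ℝ) := Real.log_pos hKr1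
  have hα0 : 0 ≤ α := div_nonneg (Real.log_nonneg hCr1) hlogK.le
  set s : ℕ := Nat.clog Kn n with hsdef
  have hs1 : 1 ≤ s := Nat.clog_pos hkj2 hn
  have h1 : n ≤ Kn ^ s := Nat.le_pow_clog hkj2 n
  have h2 : Kn ^ (s - 1) < n := by
    have := Nat.pow_pred_clog_lt_self hkj2 hn
    simpa [Nat.pred_eq_sub_one] using this
  -- identify the counting set
  have hset : X ∩ Set.Icc (m + 1) (m + n) =
      {y : ℕ | y ∈ X ∧ (m:ℝ) < (y:ℝ) ∧ (y:ℝ) ≤ (m:ℝ) + (n:ℝ)} := by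
    ext y
    simp only [Set.mem_inter_iff, Set.mem_Icc, Set.mem_setOf_eq]
    constructor
    · rintro ⟨h1', h2', h3'⟩
      refine ⟨h1', by exact_mod_cast Nat.lt_of_succ_le h2', by exact_mod_cast h3'⟩
    · rintro ⟨h1', h2', h3'⟩
      have : m < y := by exact_mod_cast h2'
      have : y ≤ m + n := by exact_mod_cast h3'
      exact ⟨h1', by omega, this⟩
  have hcount :
      ((X ∩ Set.Icc (m + 1) (m + n)).ncard : ℝ) ≤ ((C^s : ℕ) : ℝ) := by
    rw [hset]
    have := key s (m:ℝ) (n:ℝ) (by positivity) (by exact_mod_cast h1)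
    exact_mod_cast this
  refine hcount.trans ?_
  -- C^s ≤ C * n^α
  have hCpos : (0:ℝ) < (C:ℝ) := lt_of_lt_of_le one_pos hCr1
  have hrp : ((Kn:ℝ) ^ (s-1)) ^ α = (C:ℝ) ^ (s-1) := by
    have hlog : Real.log (Kn:ℝ) * α = Real.log (C:ℝ) := by
      rw [hαdef]; field_simp
    rw [Real.rpow_def_of_pos (by positivity), Real.log_pow]
    rw [mul_assoc, hlog, Real.exp_nat_mul, Real.exp_log hCpos]
  have hmono : ((Kn:ℝ) ^ (s-1)) ^ α ≤ (n:ℝ) ^ α := by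
    apply Real.rpow_le_rpow (by positivity) _ hα0
    exact_mod_cast h2.le
  rw [hrp] at hmono
  have hsplit : ((C^s : ℕ) : ℝ) = (C:ℝ) * (C:ℝ)^(s-1) := by
    push_cast
    rw [← pow_succ']
    congr 1
    omega
  rw [hsplit]
  exact mul_le_mul_of_nonneg_left hmono hCpos.le
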